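/- Let $\omega, \eta \in \mathbb{R}^d$ with $|\omega| = 1$, and suppose there exists $c > 0$ such that $|(\omega + 2\eta)\cdot\omega| \ge c\,|\omega + 2\eta|$. Then for every $z \in \mathbb{R}^d$ with $z \cdot (\omega + 2\eta) = 0$, writing $P z = z - (z\cdot\omega)\omega$, we have the lower bound $\|P z \wedge (\omega + 2\eta)\| \ge |Pz|\,|(\omega + 2\eta)\cdot\omega| \ge c'\,|z|\,|\omega + 2\eta|$ for a constant $c' > 0$ depending only on $c$ and an upper bound for $|\eta|$. -/
import Mathlib

open RealInnerProductSpace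

/-- The magnitude of the wedge product of two vectors:
`‖a ∧ b‖² = ‖a‖²‖b‖² - (a·b)²`. -/
noncomputable def wedgeNorm {d : ℕ} (a b : EuclideanSpace ℝ (Fin d)) : ℝ :=
  Real.sqrt (‖a‖ ^ 2 * ‖b‖ ^ 2 - ⟪a, b⟫ ^ 2)

private lemma wedge_aux1 (W U a p : ℝ) (hW0 : 0 ≤ W) (hU0 : 0 ≤ U)
    (hCS : |p| ≤ W * U) : (W * |a|) ^ 2 ≤ W ^ 2 * (a ^ 2 + U ^ 2) - p ^ 2 := by
  nlinarith [sq_abs a, sq_abs p, abs_nonneg p, mul_self_le_mul_self (abs_nonneg p) hCS]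

private lemma wedge_aux2 (m X Z U W a t p : ℝ) (hm0 : 0 < m) (hm1 : m ≤ 1)
    (hX0 : 0 ≤ X) (hZ0 : 0 ≤ Z) (hU0 : 0 ≤ U) (hW0 : 0 ≤ W)
    (hξsq : X ^ 2 = a ^ 2 + U ^ 2) (hzsq : Z ^ 2 = t ^ 2 + W ^ 2)
    (hCS : |p| ≤ W * U) (hzsplit : t * a + p = 0) (hmξ : m * X ≤ |a|) :
    m ^ 2 * Z * X ≤ W * |a| := by
  by_cases ha : a = 0
  · have hX0' : X = 0 := by
      rw [ha, abs_zero] at hmξ; nlinarith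
    rw [hX0']
    have : m ^ 2 * Z * 0 = 0 := by ring
    rw [this]
    positivity
  · have ha2 : 0 < a ^ 2 := lt_of_le_of_ne (sq_nonneg a) (Ne.symm (pow_ne_zero 2 ha))
    have h1 : m ^ 2 * U ^ 2 ≤ (1 - m ^ 2) * a ^ 2 := by
      have h : m ^ 2 * X ^ 2 ≤ a ^ 2 := by
        nlinarith [sq_abs a, mul_self_le_mul_self (mul_nonneg hm0.le hX0) hmξ]
      nlinarith
    have h2' : t ^ 2 * a ^ 2 ≤ W ^ 2 * U ^ 2 := by
      have h2 : |t| * |a| ≤ W * U := by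
        have he : |t * a| = |p| := by
          rw [show t * a = -p by linarith, abs_neg]
        rw [← abs_mul, he]; exact hCS
      nlinarith [abs_nonneg t, abs_nonneg a, sq_abs t, sq_abs a,
        mul_self_le_mul_self (mul_nonneg (abs_nonneg t) (abs_nonneg a)) h2]
    have h3 : m ^ 2 * t ^ 2 ≤ (1 - m ^ 2) * W ^ 2 := by
      have key : m ^ 2 * t ^ 2 * a ^ 2 ≤ (1 - m ^ 2) * W ^ 2 * a ^ 2 := by
        nlinarith [sq_nonneg W, sq_nonneg t, mul_nonneg (sq_nonneg m) (sq_nonneg t)]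
      exact le_of_mul_le_mul_right (by linarith) ha2
    have hmz : m * Z ≤ W := by
      have hsq : (m * Z) ^ 2 ≤ W ^ 2 := by
        rw [mul_pow, hzsq]; nlinarith
      nlinarith [mul_nonneg hm0.le hZ0]
    calc m ^ 2 * Z * X = (m * Z) * (m * X) := by ring
      _ ≤ W * |a| := mul_le_mul hmz hmξ (by positivity) hW0

/-- Under the transversality condition `|(ω+2η)·ω| ≥ c‖ω+2η‖`, for every `z`
orthogonal to `ω+2η`, writing `Pz = z - (z·ω)ω`, we have
`‖Pz ∧ (ω+2η)‖ ≥ ‖Pz‖ |(ω+2η)·ω| ≥ c' ‖z‖ ‖ω+2η‖`, with `c' > 0` depending only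
on `c` and an upper bound `B` for `‖η‖`. -/
theorem wedge_lower_bound_transversality
    (c B : ℝ) (hc : 0 < c) (hB : 0 < B) :
    ∃ c' : ℝ, 0 < c' ∧
      ∀ (d : ℕ) (ω η z : EuclideanSpace ℝ (Fin d)),
        ‖ω‖ = 1 → ‖η‖ ≤ B →
        c * ‖ω + (2 : ℝ) • η‖ ≤ |⟪ω + (2 : ℝ) • η, ω⟫| →
        ⟪z, ω + (2 : ℝ) • η⟫ = 0 →
        ‖z - ⟪z, ω⟫ • ω‖ * |⟪ω + (2 : ℝ) • η, ω⟫| ≤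
            wedgeNorm (z - ⟪z, ω⟫ • ω) (ω + (2 : ℝ) • η) ∧
        c' * ‖z‖ * ‖ω + (2 : ℝ) • η‖ ≤ ‖z - ⟪z, ω⟫ • ω‖ * |⟪ω + (2 : ℝ) • η, ω⟫| := by
  refine ⟨(min c 1) ^ 2, by positivity, ?_⟩
  intro d ω η z hω hη htrans hzξ
  set ξ : EuclideanSpace ℝ (Fin d) := ω + (2 : ℝ) • η with hξdef
  set a : ℝ := ⟪ξ, ω⟫ with hadef
  set t : ℝ := ⟪z, ω⟫ with htdef
  set w : EuclideanSpace ℝ (Fin d) := z - t • ω with hwdef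
  set m : ℝ := min c 1 with hmdef
  have hm0 : 0 < m := lt_min hc one_pos
  have hm1 : m ≤ 1 := min_le_right _ _
  have hmc : m ≤ c := min_le_left _ _
  have hωω : ⟪ω, ω⟫ = 1 := by
    rw [real_inner_self_eq_norm_sq, hω]; norm_num
  have hcomm : ⟪ω, ξ⟫ = a := by rw [hadef]; exact (real_inner_comm ω ξ).symm
  have hwω : ⟪w, ω⟫ = 0 := by
    show ⟪z - t • ω, ω⟫ = 0
    rw [inner_sub_left, real_inner_smul_left, hωω, mul_one, htdef, sub_self]
  set u : EuclideanSpace ℝ (Fin d) := ξ - a • ω with hudef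
  have hωu : ⟪ω, u⟫ = 0 := by
    show ⟪ω, ξ - a • ω⟫ = 0
    rw [inner_sub_right, real_inner_smul_right, hωω, mul_one, hcomm, sub_self]
  have hξsq : ‖ξ‖ ^ 2 = a ^ 2 + ‖u‖ ^ 2 := by
    have hξu : ξ = a • ω + u := by rw [hudef]; abel
    rw [hξu, norm_add_sq_real]
    have h1 : ⟪a • ω, u⟫ = 0 := by rw [real_inner_smul_left, hωu, mul_zero]
    rw [h1, norm_smul, hω]
    simp [mul_pow, sq_abs]
  have hzsq : ‖z‖ ^ 2 = t ^ 2 + ‖w‖ ^ 2 := by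
    have hz : z = t • ω + w := by rw [hwdef]; abel
    rw [hz, norm_add_sq_real]
    have h1 : ⟪t • ω, w⟫ = 0 := by
      rw [real_inner_smul_left, real_inner_comm, hwω, mul_zero]
    rw [h1, norm_smul, hω]
    simp [mul_pow, sq_abs]
  have hwξ : ⟪w, ξ⟫ = ⟪w, u⟫ := by
    have h1 : ⟪w, u⟫ = ⟪w, ξ⟫ - a * ⟪w, ω⟫ := by
      show ⟪w, ξ - a • ω⟫ = _
      rw [inner_sub_right, real_inner_smul_right]
    rw [h1, hwω, mul_zero, sub_zero]
  have hzsplit : t * a + ⟪w, u⟫ = 0 := by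
    have h1 : ⟪w, ξ⟫ = ⟪z, ξ⟫ - t * ⟪ω, ξ⟫ := by
      show ⟪z - t • ω, ξ⟫ = _
      rw [inner_sub_left, real_inner_smul_left]
    rw [hcomm, hzξ, zero_sub] at h1
    rw [← hwξ, h1]; ring
  have hCS : |⟪w, u⟫| ≤ ‖w‖ * ‖u‖ := abs_real_inner_le_norm w u
  clear_value u
  clear hudef hωu hcomm hωω hzξ
  clear_value ξ a t w m
  set p : ℝ := ⟪w, u⟫ with hpdef
  clear_value p
  set W : ℝ := ‖w‖ with hWdef
  set U : ℝ := ‖u‖ with hUdef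
  set Z : ℝ := ‖z‖ with hZdef
  set X : ℝ := ‖ξ‖ with hXdef
  have hW0 : 0 ≤ W := norm_nonneg w
  have hU0 : 0 ≤ U := norm_nonneg u
  have hZ0 : 0 ≤ Z := norm_nonneg z
  have hX0 : 0 ≤ X := norm_nonneg ξ
  clear_value W U Z X
  have hmξ : m * X ≤ |a| := le_trans (by nlinarith) htrans
  constructor
  · rw [wedgeNorm, hwξ, hWdef.symm, hXdef.symm, hξsq]
    calc W * |a| = Real.sqrt ((W * |a|) ^ 2) := (Real.sqrt_sq (by positivity)).symm
      _ ≤ _ := Real.sqrt_le_sqrt (wedge_aux1 W U a p hW0 hU0 hCS)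
  · exact wedge_aux2 m X Z U W a t p hm0 hm1 hX0 hZ0 hU0 hW0 hξsq hzsq hCS hzsplit hmξ
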